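/- arXiv:0905.0121 — 3 statements merged into one kernel-verified Lean document; each statement's English description precedes it below -/
import Mathlib

section
/- The tropical roots of a max-plus polynomial P with coefficients P_0,...,P_n are the opposites of the slopes of the linear segments forming the Newton polygon Δ(P), and the multiplicity of each root equals the horizontal width of the corresponding segment. -/
/-- The tropical roots of a max-plus polynomial `P` (with finite
coefficients `P_0,…,P_n`) are the opposites of the slopes of the linear segments of the
Newton polygon `Δ(P)` (the upper boundary of the convex hull of the points `(k, P_k)`),
with multiplicity of each root equal to the horizontal width of the corresponding
segment.  Equivalently, writing `F t` for the height of the upper boundary of the convex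
hull above abscissa `t`, the slope of `Δ(P)` on the unit interval `[k, k+1]` is `−c_k`
where `c_0 ≤ … ≤ c_{n-1}` are the tropical roots sorted increasingly (a root `c` of
multiplicity `m` thus accounts for a segment of slope `−c` and horizontal width `m`). -/
theorem maxplus_roots_are_newton_polygon_slopes (n : ℕ) (P : Fin (n + 1) → ℝ)
    (c : Fin n → ℝ) (hmono : Monotone c)
    (hfact : ∀ x : ℝ,
      (Finset.univ.sup' Finset.univ_nonempty fun k : Fin (n + 1) => P k + (k : ℕ) * x) =
        P (Fin.last n) + ∑ k : Fin n, max x (c k))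
    (F : ℝ → ℝ)
    (hF : ∀ t : ℝ, 0 ≤ t → t ≤ n → IsGreatest
      {y : ℝ | (t, y) ∈ convexHull ℝ (Set.range fun k : Fin (n + 1) => (((k : ℕ) : ℝ), P k))}
      (F t)) :
    ∀ k : Fin n, F ((k : ℕ) + 1) - F (k : ℕ) = -(c k) := by
  intro k
  have hn : 0 < n := k.pos
  set S : Set (ℝ × ℝ) :=
    convexHull ℝ (Set.range fun k : Fin (n + 1) => (((k : ℕ) : ℝ), P k)) with hS
  set FN : ℕ → ℝ := fun i => F (i : ℝ) with hFN
  -- membership of the base points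
  have hmemP : ∀ j : Fin (n + 1), ((((j : ℕ) : ℝ)), P j) ∈ S :=
    fun j => subset_convexHull ℝ _ ⟨j, rfl⟩
  have hFmem : ∀ m : ℕ, m ≤ n → (((m : ℝ)), FN m) ∈ S := by
    intro m hm
    exact (hF (m : ℝ) (Nat.cast_nonneg m) (by exact_mod_cast hm)).1
  have hFub : ∀ m : ℕ, m ≤ n → ∀ y : ℝ, (((m : ℝ)), y) ∈ S → y ≤ FN m := by
    intro m hm y hy
    exact (hF (m : ℝ) (Nat.cast_nonneg m) (by exact_mod_cast hm)).2 hy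
  have hPF : ∀ j : Fin (n + 1), P j ≤ FN (j : ℕ) :=
    fun j => hFub (j : ℕ) (by omega) (P j) (hmemP j)
  -- p is the max-plus polynomial
  set p : ℝ → ℝ := fun x => P (Fin.last n) + ∑ j : Fin n, max x (c j) with hp
  have hPle : ∀ (j : Fin (n + 1)) (x : ℝ), P j + (j : ℕ) * x ≤ p x := by
    intro j x
    rw [hp]
    simp only
    rw [← hfact x]
    exact Finset.le_sup' (fun k : Fin (n + 1) => P k + (k : ℕ) * x) (Finset.mem_univ j)
  -- upper bound from hull decomposition : F m + m x ≤ p x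
  have hFle : ∀ m : ℕ, m ≤ n → ∀ x : ℝ, FN m + m * x ≤ p x := by
    intro m hm x
    obtain ⟨ι, hι, w, z, hw0, hw1, hz, hxz⟩ :=
      mem_convexHull_iff_exists_fintype.1 (hFmem m hm)
    letI := hι
    choose g hg using hz
    simp only [← hg] at hxz
    have h1 : ∑ i, w i * ((g i : ℕ) : ℝ) = (m : ℝ) := by
      have := congrArg Prod.fst hxz
      simpa [Prod.fst_sum, Prod.smul_mk, smul_eq_mul] using this
    have h2 : ∑ i, w i * P (g i) = FN m := by
      have := congrArg Prod.snd hxz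
      simpa [Prod.snd_sum, Prod.smul_mk, smul_eq_mul] using this
    have hsum : FN m + (m : ℝ) * x = ∑ i, w i * (P (g i) + ((g i : ℕ) : ℝ) * x) := by
      simp only [mul_add, Finset.sum_add_distrib, h2]
      congr 1
      rw [← h1, Finset.sum_mul]
      exact Finset.sum_congr rfl fun i _ => mul_assoc _ _ _
    rw [hsum]
    calc ∑ i, w i * (P (g i) + ((g i : ℕ) : ℝ) * x)
        ≤ ∑ i, w i * p x :=
          Finset.sum_le_sum fun i _ =>
            mul_le_mul_of_nonneg_left (hPle (g i) x) (hw0 i)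
      _ = p x := by rw [← Finset.sum_mul, hw1, one_mul]
  -- concavity of FN
  have hconc : ∀ i : ℕ, i + 2 ≤ n → FN i + FN (i + 2) ≤ 2 * FN (i + 1) := by
    intro i hi
    have ha := hFmem i (by omega)
    have hb := hFmem (i + 2) (by omega)
    have hmid :
        ((1 / 2 : ℝ)) • (((i : ℝ)), FN i) + ((1 / 2 : ℝ)) • ((((i + 2 : ℕ) : ℝ)), FN (i + 2))
          = ((((i + 1 : ℕ) : ℝ)), (FN i + FN (i + 2)) / 2) := by
      simp only [Prod.smul_mk, Prod.mk_add_mk, smul_eq_mul, Prod.mk.injEq]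
      push_cast
      constructor <;> ring
    have hmem : ((((i + 1 : ℕ) : ℝ)), (FN i + FN (i + 2)) / 2) ∈ S := by
      rw [← hmid]
      exact (convex_convexHull ℝ _) ha hb (by norm_num) (by norm_num) (by norm_num)
    have := hFub (i + 1) (by omega) _ hmem
    linarith
  -- differences are monotone
  set d : ℕ → ℝ := fun i => FN i - FN (i + 1) with hd
  have hdmono : ∀ i j : ℕ, i ≤ j → j + 1 ≤ n → d i ≤ d j := by
    intro i j hij hjn
    induction j, hij using Nat.le_induction with
    | base => exact le_refl _
    | succ j hj ih =>
        have h1 := hconc j (by omega)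
        have h2 := ih (by omega)
        simp only [hd] at h2 ⊢
        have : FN j - FN (j + 1) ≤ FN (j + 1) - FN (j + 2) := by linarith
        calc FN i - FN (i + 1) ≤ FN j - FN (j + 1) := h2
          _ ≤ FN (j + 1) - FN (j + 1 + 1) := by
              have : j + 1 + 1 = j + 2 := by ring
              rw [this]; linarith
  -- the key identity : F m = P n + ∑_{j ≥ m} c j for integer 0 ≤ m ≤ n
  have key : ∀ m : ℕ, m ≤ n →
      FN m = P (Fin.last n) + ∑ j ∈ Finset.univ.filter (fun j : Fin n => m ≤ (j : ℕ)), c j := by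
    intro m hm
    have hcard : (Finset.univ.filter (fun j : Fin n => (j : ℕ) < m)).card = m := by
      have himg : (Finset.univ.filter (fun j : Fin n => (j : ℕ) < m)).image Fin.val
          = Finset.range m := by
        ext a
        simp only [Finset.mem_image, Finset.mem_filter, Finset.mem_univ, true_and,
          Finset.mem_range]
        constructor
        · rintro ⟨j, hj, rfl⟩; exact hj
        · intro ha; exact ⟨⟨a, lt_of_lt_of_le ha hm⟩, ha, rfl⟩
      have h := Finset.card_image_of_injective
        (Finset.filter (fun j : Fin n => (j : ℕ) < m) Finset.univ) Fin.val_injective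
      rw [himg, Finset.card_range] at h
      omega
    have hsplit : ∀ x : ℝ, ∑ j : Fin n, max x (c j) =
        (∑ j ∈ Finset.univ.filter (fun j : Fin n => (j : ℕ) < m), max x (c j)) +
        ∑ j ∈ Finset.univ.filter (fun j : Fin n => m ≤ (j : ℕ)), max x (c j) := by
      intro x
      rw [← Finset.sum_filter_add_sum_filter_not Finset.univ (fun j : Fin n => (j : ℕ) < m)]
      congr 1
      apply Finset.sum_congr _ (fun _ _ => rfl)
      ext j; simp [not_lt]
    -- lower estimate for the sum of maxima, valid for every x
    have hC : ∀ x : ℝ, (m : ℝ) * x +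
        (∑ j ∈ Finset.univ.filter (fun j : Fin n => m ≤ (j : ℕ)), c j) ≤
        ∑ j : Fin n, max x (c j) := by
      intro x
      rw [hsplit x]
      have h1 : (m : ℝ) * x = ∑ _j ∈ Finset.univ.filter (fun j : Fin n => (j : ℕ) < m), x := by
        rw [Finset.sum_const, hcard, nsmul_eq_mul]
      apply add_le_add
      · rw [h1]; exact Finset.sum_le_sum fun j _ => le_max_left _ _
      · exact Finset.sum_le_sum fun j _ => le_max_right _ _
    -- the special point μ and x₀ where equality holds
    set μ : ℕ := min m (n - 1) with hμ
    have hμn : μ < n := by omega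
    set x₀ : ℝ := c ⟨μ, hμn⟩ with hx₀
    have hD : ∑ j : Fin n, max x₀ (c j) = (m : ℝ) * x₀ +
        ∑ j ∈ Finset.univ.filter (fun j : Fin n => m ≤ (j : ℕ)), c j := by
      rw [hsplit x₀]
      congr 1
      · have : ∀ j ∈ Finset.univ.filter (fun j : Fin n => (j : ℕ) < m),
            max x₀ (c j) = x₀ := by
          intro j hj
          simp only [Finset.mem_filter, Finset.mem_univ, true_and] at hj
          exact max_eq_left (hmono (show j ≤ ⟨μ, hμn⟩ from by
            simp only [Fin.le_def]; omega))
        rw [Finset.sum_congr rfl this, Finset.sum_const, hcard, nsmul_eq_mul]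
      · apply Finset.sum_congr rfl
        intro j hj
        simp only [Finset.mem_filter, Finset.mem_univ, true_and] at hj
        exact max_eq_right (hmono (show (⟨μ, hμn⟩ : Fin n) ≤ j from by
          simp only [Fin.le_def]; omega))
    -- upper bound : FN m ≤ A m
    have hup : FN m ≤ P (Fin.last n) +
        ∑ j ∈ Finset.univ.filter (fun j : Fin n => m ≤ (j : ℕ)), c j := by
      have h1 := hFle m hm x₀
      rw [hp] at h1
      simp only at h1
      rw [hD] at h1
      linarith
    -- lower bound via a supporting slope
    set x₁ : ℝ := d μ with hx₁
    have claim_up : ∀ j : ℕ, m ≤ j → j ≤ n →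
        FN j + (j : ℝ) * x₁ ≤ FN m + (m : ℝ) * x₁ := by
      intro j hmj hjn
      induction j, hmj using Nat.le_induction with
      | base => exact le_refl _
      | succ j hj ih =>
          have hdj : d μ ≤ d j := hdmono μ j (by omega) (by omega)
          have hih := ih (by omega)
          simp only [hd] at hdj
          have hx : x₁ = FN μ - FN (μ + 1) := hx₁
          have : FN (j + 1) + ((j : ℝ) + 1) * x₁ ≤ FN j + (j : ℝ) * x₁ := by
            nlinarith [hdj]
          push_cast
          linarith
    have claim_down : ∀ j l : ℕ, j ≤ l → l ≤ m →
        FN j + (j : ℝ) * x₁ ≤ FN l + (l : ℝ) * x₁ := by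
      intro j l hjl hlm
      induction l, hjl using Nat.le_induction with
      | base => exact le_refl _
      | succ l hl ih =>
          have hdl : d l ≤ d μ := hdmono l μ (by omega) (by omega)
          have hih := ih (by omega)
          simp only [hd] at hdl
          have hx : x₁ = FN μ - FN (μ + 1) := hx₁
          have : FN l + (l : ℝ) * x₁ ≤ FN (l + 1) + ((l : ℝ) + 1) * x₁ := by
            nlinarith [hdl]
          push_cast
          linarith
    have hsup : ∀ j : Fin (n + 1), FN (j : ℕ) + ((j : ℕ) : ℝ) * x₁ ≤ FN m + (m : ℝ) * x₁ := by
      intro j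
      rcases le_or_gt (j : ℕ) m with h | h
      · exact claim_down (j : ℕ) m h (le_refl m)
      · exact claim_up (j : ℕ) (le_of_lt h) (by omega)
    have hple2 : p x₁ ≤ FN m + (m : ℝ) * x₁ := by
      have hs : (Finset.univ.sup' Finset.univ_nonempty
          fun j : Fin (n + 1) => P j + (j : ℕ) * x₁) ≤ FN m + (m : ℝ) * x₁ :=
        Finset.sup'_le _ _ fun j _ =>
          le_trans (add_le_add (hPF j) le_rfl) (hsup j)
      rw [hfact x₁] at hs
      exact hs
    have hlow : P (Fin.last n) +
        ∑ j ∈ Finset.univ.filter (fun j : Fin n => m ≤ (j : ℕ)), c j ≤ FN m := by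
      have h1 := hC x₁
      rw [hp] at hple2
      simp only at hple2
      linarith
    linarith
  -- conclude
  have e1 := key (k : ℕ) (by omega)
  have e2 := key ((k : ℕ) + 1) (by omega)
  have hins : (Finset.univ.filter fun j : Fin n => (k : ℕ) ≤ (j : ℕ))
      = insert k (Finset.univ.filter fun j : Fin n => (k : ℕ) + 1 ≤ (j : ℕ)) := by
    ext j
    simp only [Finset.mem_filter, Finset.mem_univ, true_and, Finset.mem_insert, Fin.ext_iff]
    omega
  have hknot : k ∉ (Finset.univ.filter fun j : Fin n => (k : ℕ) + 1 ≤ (j : ℕ)) := by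
    simp
  have hsum : (∑ j ∈ Finset.univ.filter (fun j : Fin n => (k : ℕ) ≤ (j : ℕ)), c j)
      = c k + ∑ j ∈ Finset.univ.filter (fun j : Fin n => (k : ℕ) + 1 ≤ (j : ℕ)), c j := by
    rw [hins, Finset.sum_insert hknot]
  have hcast : ((k : ℕ) : ℝ) + 1 = (((k : ℕ) + 1 : ℕ) : ℝ) := by push_cast; ring
  have hFN1 : F (((k : ℕ) : ℝ) + 1) = FN ((k : ℕ) + 1) := by rw [hFN]; norm_num
  have hFN0 : F (((k : ℕ) : ℝ)) = FN (k : ℕ) := rfl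
  rw [hFN1, hFN0, e1, e2, hsum]
  ring
end

section
/- Let A_2 ∈ ℂ^{n×n} be invertible, γ_2 = ‖A_2‖, γ_1 = ‖A_1‖, γ_0 = ‖A_0‖, δ = γ_1²/(γ_0 γ_2). Set Ā_2 = γ_2^{-1} A_2, Ā_1 = γ_1^{-1} A_1, Ā_0 = (γ_2/γ_1²) A_0, and let X be the 2n×2n block companion matrix with first block row (−Ā_2^{-1}Ā_1, −Ā_2^{-1}Ā_0) and second block row (I, 0). Then ‖X‖ ≤ 1 + cond(A_2)(1 + 1/δ). -/
/-- The operator 2-norm of a complex matrix. -/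
noncomputable def opNorm {m : Type*} [Fintype m] [DecidableEq m]
    (A : Matrix m m ℂ) : ℝ :=
  ‖(Matrix.toEuclideanCLM (𝕜 := ℂ) A : EuclideanSpace ℂ m →L[ℂ] EuclideanSpace ℂ m)‖

/-- Condition number `cond A = ‖A‖ ‖A⁻¹‖` for the operator 2-norm. -/
noncomputable def condNum {m : Type*} [Fintype m] [DecidableEq m]
    (A : Matrix m m ℂ) : ℝ :=
  opNorm A * opNorm A⁻¹

section CompanionAux

open scoped Matrix Matrix.Norms.L2Operator

variable {m p : Type*} [Fintype m] [DecidableEq m] [Fintype p] [DecidableEq p]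

private lemma opNorm_eq' (A : Matrix m m ℂ) : opNorm A = ‖A‖ := rfl

omit [DecidableEq m] [DecidableEq p] in
private lemma euclid_norm_sq (x : EuclideanSpace ℂ (m ⊕ p)) :
    ‖x‖ ^ 2 = ‖(EuclideanSpace.equiv m ℂ).symm (fun i => x (Sum.inl i))‖ ^ 2
      + ‖(EuclideanSpace.equiv p ℂ).symm (fun j => x (Sum.inr j))‖ ^ 2 := by
  rw [EuclideanSpace.norm_eq x, EuclideanSpace.norm_eq, EuclideanSpace.norm_eq,
    Real.sq_sqrt (by positivity), Real.sq_sqrt (by positivity),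
    Real.sq_sqrt (by positivity)]
  exact Fintype.sum_sum_type _

private lemma l2_fromBlocks_le (A : Matrix m m ℂ) (B : Matrix m p ℂ) (C : Matrix p m ℂ)
    (D : Matrix p p ℂ) :
    ‖Matrix.fromBlocks A B C D‖ ≤ ‖A‖ + ‖B‖ + ‖C‖ + ‖D‖ := by
  rw [Matrix.l2_opNorm_def]
  apply ContinuousLinearMap.opNorm_le_bound _ (by positivity)
  intro x
  set u : m → ℂ := fun i => x (Sum.inl i) with hu
  set v : p → ℂ := fun j => x (Sum.inr j) with hv
  set x₁ : EuclideanSpace ℂ m := (EuclideanSpace.equiv m ℂ).symm u with hx₁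
  set x₂ : EuclideanSpace ℂ p := (EuclideanSpace.equiv p ℂ).symm v with hx₂
  have hxsq : ‖x‖ ^ 2 = ‖x₁‖ ^ 2 + ‖x₂‖ ^ 2 := euclid_norm_sq x
  have hx1le : ‖x₁‖ ≤ ‖x‖ := by
    nlinarith [norm_nonneg x₁, norm_nonneg x₂, norm_nonneg x, sq_nonneg ‖x₂‖]
  have hx2le : ‖x₂‖ ≤ ‖x‖ := by
    nlinarith [norm_nonneg x₁, norm_nonneg x₂, norm_nonneg x]
  set y : EuclideanSpace ℂ (m ⊕ p) :=
    (LinearEquiv.trans Matrix.toEuclideanLin LinearMap.toContinuousLinearMap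
      (Matrix.fromBlocks A B C D)) x with hy
  have hyval : y = (EuclideanSpace.equiv (m ⊕ p) ℂ).symm
      (Sum.elim (A *ᵥ u + B *ᵥ v) (C *ᵥ u + D *ᵥ v)) := by
    have hxe : Sum.elim u v = (WithLp.equiv 2 ((m ⊕ p) → ℂ)) x :=
      funext (by rintro (i | j) <;> rfl)
    have h1 : (WithLp.equiv 2 _) y = Matrix.toLin' (Matrix.fromBlocks A B C D)
        ((WithLp.equiv 2 _) x) := rfl
    apply (WithLp.equiv 2 ((m ⊕ p) → ℂ)).injective
    rw [h1, ← hxe, Matrix.toLin'_apply, Matrix.fromBlocks_mulVec]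
    rfl
  set y₁ : EuclideanSpace ℂ m := (EuclideanSpace.equiv m ℂ).symm (A *ᵥ u + B *ᵥ v) with hy₁
  set y₂ : EuclideanSpace ℂ p := (EuclideanSpace.equiv p ℂ).symm (C *ᵥ u + D *ᵥ v) with hy₂
  have hysq : ‖y‖ ^ 2 = ‖y₁‖ ^ 2 + ‖y₂‖ ^ 2 := by
    rw [hyval]; exact euclid_norm_sq _
  have hsplit : ‖y‖ ≤ ‖y₁‖ + ‖y₂‖ := by
    nlinarith [norm_nonneg y, norm_nonneg y₁, norm_nonneg y₂,
      mul_nonneg (norm_nonneg y₁) (norm_nonneg y₂)]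
  have h1 : ‖y₁‖ ≤ ‖A‖ * ‖x‖ + ‖B‖ * ‖x‖ := by
    have : y₁ = (EuclideanSpace.equiv m ℂ).symm (A *ᵥ u)
        + (EuclideanSpace.equiv m ℂ).symm (B *ᵥ v) := rfl
    rw [this]
    refine (norm_add_le _ _).trans (add_le_add ?_ ?_)
    · exact (Matrix.l2_opNorm_mulVec A x₁).trans
        (mul_le_mul_of_nonneg_left hx1le (norm_nonneg _))
    · exact (Matrix.l2_opNorm_mulVec B x₂).trans
        (mul_le_mul_of_nonneg_left hx2le (norm_nonneg _))
  have h2 : ‖y₂‖ ≤ ‖C‖ * ‖x‖ + ‖D‖ * ‖x‖ := by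
    have : y₂ = (EuclideanSpace.equiv p ℂ).symm (C *ᵥ u)
        + (EuclideanSpace.equiv p ℂ).symm (D *ᵥ v) := rfl
    rw [this]
    refine (norm_add_le _ _).trans (add_le_add ?_ ?_)
    · exact (Matrix.l2_opNorm_mulVec C x₁).trans
        (mul_le_mul_of_nonneg_left hx1le (norm_nonneg _))
    · exact (Matrix.l2_opNorm_mulVec D x₂).trans
        (mul_le_mul_of_nonneg_left hx2le (norm_nonneg _))
  calc ‖y‖ ≤ ‖y₁‖ + ‖y₂‖ := hsplit
    _ ≤ (‖A‖ * ‖x‖ + ‖B‖ * ‖x‖) + (‖C‖ * ‖x‖ + ‖D‖ * ‖x‖) := add_le_add h1 h2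
    _ = (‖A‖ + ‖B‖ + ‖C‖ + ‖D‖) * ‖x‖ := by ring

end CompanionAux

open scoped Matrix Matrix.Norms.L2Operator

set_option maxHeartbeats 1000000 in
/-- with `A₂` invertible, `γ_i = ‖A_i‖`, `δ = γ₁²/(γ₀γ₂)`,
`B₂ = γ₂⁻¹A₂`, `B₁ = γ₁⁻¹A₁`, `B₀ = (γ₂/γ₁²)A₀`, the block companion matrix
`X = [[−B₂⁻¹B₁, −B₂⁻¹B₀],[I, 0]]` satisfies `‖X‖ ≤ 1 + cond(A₂)(1 + 1/δ)`. -/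
theorem companion_norm_bound (n : ℕ) (A₂ A₁ A₀ : Matrix (Fin n) (Fin n) ℂ)
    (hA₂ : IsUnit A₂.det)
    (γ₂ γ₁ γ₀ δ : ℝ) (hγ₂ : γ₂ = opNorm A₂) (hγ₁ : γ₁ = opNorm A₁) (hγ₀ : γ₀ = opNorm A₀)
    (hγ₀pos : 0 < γ₀) (hγ₁pos : 0 < γ₁)
    (hδ : δ = γ₁ ^ 2 / (γ₀ * γ₂))
    (B₂ B₁ B₀ : Matrix (Fin n) (Fin n) ℂ)
    (h₂ : B₂ = (γ₂⁻¹ : ℂ) • A₂) (h₁ : B₁ = (γ₁⁻¹ : ℂ) • A₁)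
    (h₀ : B₀ = ((γ₂ / γ₁ ^ 2 : ℝ) : ℂ) • A₀)
    (Xc : Matrix (Fin n ⊕ Fin n) (Fin n ⊕ Fin n) ℂ)
    (hX : Xc = Matrix.fromBlocks (-(B₂⁻¹ * B₁)) (-(B₂⁻¹ * B₀)) 1 0) :
    opNorm Xc ≤ 1 + condNum A₂ * (1 + 1 / δ) := by
  have hn : Nonempty (Fin n) := by
    by_contra h
    have h0 : A₀ = 0 := by
      ext i j
      exact absurd ⟨i⟩ h
    rw [hγ₀, h0, opNorm_eq', norm_zero] at hγ₀pos
    exact lt_irrefl 0 hγ₀pos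
  have hA₂ne : A₂ ≠ 0 := by
    intro h
    rw [h, @Matrix.det_zero _ _ _ _ _ hn] at hA₂
    exact hA₂.ne_zero rfl
  have hγ₂pos : 0 < γ₂ := by
    rw [hγ₂, opNorm_eq']
    exact norm_pos_iff.mpr hA₂ne
  have hγ₂ne : (γ₂ : ℂ) ≠ 0 := by exact_mod_cast ne_of_gt hγ₂pos
  have hB₂inv : B₂⁻¹ = (γ₂ : ℂ) • A₂⁻¹ := by
    apply Matrix.inv_eq_right_inv
    rw [h₂, Matrix.smul_mul, Matrix.mul_smul, smul_smul,
      inv_mul_cancel₀ hγ₂ne, one_smul, Matrix.mul_nonsing_inv _ hA₂]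
  have hnB₂inv : ‖B₂⁻¹‖ = γ₂ * ‖A₂⁻¹‖ := by
    rw [hB₂inv, norm_smul, Complex.norm_real, Real.norm_of_nonneg hγ₂pos.le]
  have hnB₁ : ‖B₁‖ = 1 := by
    rw [h₁, norm_smul, ← opNorm_eq', ← hγ₁]
    have : ‖(γ₁⁻¹ : ℂ)‖ = γ₁⁻¹ := by
      rw [← Complex.ofReal_inv, Complex.norm_real,
        Real.norm_of_nonneg (inv_nonneg.mpr hγ₁pos.le)]
    rw [this, inv_mul_cancel₀ (ne_of_gt hγ₁pos)]
  have hnB₀ : ‖B₀‖ = γ₂ / γ₁ ^ 2 * γ₀ := by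
    rw [h₀, norm_smul, Complex.norm_real, ← opNorm_eq', ← hγ₀,
      Real.norm_of_nonneg (by positivity)]
  have hone : ‖(1 : Matrix (Fin n) (Fin n) ℂ)‖ ≤ 1 := by
    rw [Matrix.cstar_norm_def, map_one]
    exact ContinuousLinearMap.norm_id_le
  have key : opNorm Xc ≤ ‖B₂⁻¹ * B₁‖ + ‖B₂⁻¹ * B₀‖ + 1 := by
    rw [opNorm_eq', hX]
    calc ‖Matrix.fromBlocks (-(B₂⁻¹ * B₁)) (-(B₂⁻¹ * B₀)) (1 : Matrix (Fin n) (Fin n) ℂ)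
          (0 : Matrix (Fin n) (Fin n) ℂ)‖
        ≤ ‖-(B₂⁻¹ * B₁)‖ + ‖-(B₂⁻¹ * B₀)‖ + ‖(1 : Matrix (Fin n) (Fin n) ℂ)‖
            + ‖(0 : Matrix (Fin n) (Fin n) ℂ)‖ := l2_fromBlocks_le _ _ _ _
      _ = ‖B₂⁻¹ * B₁‖ + ‖B₂⁻¹ * B₀‖ + ‖(1 : Matrix (Fin n) (Fin n) ℂ)‖ := by
          rw [norm_neg, norm_neg, norm_zero, add_zero]
      _ ≤ ‖B₂⁻¹ * B₁‖ + ‖B₂⁻¹ * B₀‖ + 1 := by linarith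
  have hmul₁ : ‖B₂⁻¹ * B₁‖ ≤ γ₂ * ‖A₂⁻¹‖ := by
    calc ‖B₂⁻¹ * B₁‖ ≤ ‖B₂⁻¹‖ * ‖B₁‖ := norm_mul_le _ _
      _ = γ₂ * ‖A₂⁻¹‖ := by rw [hnB₂inv, hnB₁, mul_one]
  have hmul₀ : ‖B₂⁻¹ * B₀‖ ≤ γ₂ * ‖A₂⁻¹‖ * (γ₂ / γ₁ ^ 2 * γ₀) := by
    calc ‖B₂⁻¹ * B₀‖ ≤ ‖B₂⁻¹‖ * ‖B₀‖ := norm_mul_le _ _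
      _ = γ₂ * ‖A₂⁻¹‖ * (γ₂ / γ₁ ^ 2 * γ₀) := by rw [hnB₂inv, hnB₀]
  have hcond : condNum A₂ = γ₂ * ‖A₂⁻¹‖ := by
    rw [condNum, ← hγ₂, opNorm_eq']
  have hδval : 1 / δ = γ₀ * γ₂ / γ₁ ^ 2 := by
    rw [hδ, one_div_div]
  rw [hcond, hδval]
  calc opNorm Xc ≤ ‖B₂⁻¹ * B₁‖ + ‖B₂⁻¹ * B₀‖ + 1 := key
    _ ≤ γ₂ * ‖A₂⁻¹‖ + γ₂ * ‖A₂⁻¹‖ * (γ₂ / γ₁ ^ 2 * γ₀) + 1 := by linarith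
    _ = 1 + γ₂ * ‖A₂⁻¹‖ * (1 + γ₀ * γ₂ / γ₁ ^ 2) := by ring
end

section
/- Let tp(x) = max_{0≤k≤d}(γ_k x^k) be a max-times polynomial with γ_0, γ_d > 0 and tropical roots α_1 ≤ ... ≤ α_d (with multiplicity). Then for every x > 0, tp(x) = γ_d · Π_{k=1}^{d} max(x, α_k). -/
private lemma pow_eq_imp {a b : ℝ} (ha : 0 ≤ a) (hb : 0 ≤ b) {m : ℕ} (hm : m ≠ 0)
    (h : a ^ m = b ^ m) : a = b :=
  le_antisymm ((pow_le_pow_iff_left₀ ha hb hm).1 h.le) ((pow_le_pow_iff_left₀ hb ha hm).1 h.ge)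

private lemma le_of_pow_le' {a b : ℝ} (ha : 0 ≤ a) (hb : 0 ≤ b) {m : ℕ} (hm : m ≠ 0)
    (h : a ^ m ≤ b ^ m) : a ≤ b := (pow_le_pow_iff_left₀ ha hb hm).1 h

private lemma gm_eq_max {a b T : ℝ} (ha : 0 ≤ a) (hb : 0 ≤ b) (hT : 0 < T)
    (haT : a ≤ T) (hbT : b ≤ T) {p q : ℕ} (hp : p ≠ 0) (hq : q ≠ 0)
    (h : a ^ p * b ^ q = T ^ (p + q)) : a = T ∧ b = T := by
  constructor
  · by_contra h'
    have h1 : a ^ p < T ^ p := pow_lt_pow_left₀ (lt_of_le_of_ne haT h') ha hp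
    have h2 : b ^ q ≤ T ^ q := pow_le_pow_left₀ hb hbT q
    have h3 : (0:ℝ) < T ^ q := pow_pos hT q
    nlinarith [pow_nonneg ha p, pow_pos hT p, pow_add T p q]
  · by_contra h'
    have h1 : b ^ q < T ^ q := pow_lt_pow_left₀ (lt_of_le_of_ne hbT h') hb hq
    have h2 : a ^ p ≤ T ^ p := pow_le_pow_left₀ ha haT p
    nlinarith [pow_nonneg hb q, pow_pos hT p, pow_pos hT q, pow_add T p q]

private lemma monotone_snoc {n : ℕ} (f : Fin n → ℝ) (a : ℝ) (hf : Monotone f)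
    (h : ∀ i, f i ≤ a) : Monotone (Fin.snoc f a) := by
  intro i j hij
  by_cases hj : j = Fin.last n
  · subst hj
    rw [Fin.snoc_last]
    by_cases hi : i = Fin.last n
    · subst hi; rw [Fin.snoc_last]
    · rw [← Fin.castSucc_castPred i hi, Fin.snoc_castSucc]; exact h _
  · have hi : i ≠ Fin.last n := by
      intro e; subst e
      exact hj (le_antisymm (Fin.le_last j) hij)
    rw [← Fin.castSucc_castPred i hi, ← Fin.castSucc_castPred j hj,
      Fin.snoc_castSucc, Fin.snoc_castSucc]
    apply hf
    rw [Fin.le_def] at hij ⊢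
    simpa using hij

namespace MTAux

variable {n : ℕ}

noncomputable def g (γ : Fin (n + 2) → ℝ) : ℕ → ℝ :=
  fun i => if h : i < n + 2 then γ ⟨i, h⟩ else 0

def pr (n k : ℕ) : Finset (ℕ × ℕ) :=
  (Finset.range (n+2) ×ˢ Finset.range (n+2)).filter fun p => p.1 ≤ k ∧ k ≤ p.2 ∧ p.1 < p.2

noncomputable def vv (γ : Fin (n + 2) → ℝ) (i j k : ℕ) : ℝ :=
  (g γ i ^ (j - k) * g γ j ^ (k - i)) ^ (((j - i : ℕ) : ℝ)⁻¹)

noncomputable def hat (γ : Fin (n + 2) → ℝ) (k : ℕ) : ℝ :=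
  (insert ((0:ℕ), n+1) (pr n k)).sup' ⟨(0, n+1), Finset.mem_insert_self _ _⟩
    fun p => vv γ p.1 p.2 k

noncomputable def tp (γ : Fin (n + 2) → ℝ) (x : ℝ) : ℝ :=
  Finset.univ.sup' Finset.univ_nonempty fun k : Fin (n + 2) => γ k * x ^ (k : ℕ)

variable {γ : Fin (n + 2) → ℝ} (hγ : ∀ k, 0 ≤ γ k)

include hγ in
lemma g_nonneg : ∀ i, 0 ≤ g γ i := by
  intro i; unfold g; split
  · exact hγ _
  · exact le_refl _

lemma g_eq (i : ℕ) (h : i < n + 2) : g γ i = γ ⟨i, h⟩ := dif_pos h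

lemma mem_pr {i j k : ℕ} (h1 : i ≤ k) (h2 : k ≤ j) (h3 : i < j) (h4 : j ≤ n+1) :
    (i, j) ∈ insert ((0:ℕ), n+1) (pr n k) := by
  apply Finset.mem_insert_of_mem
  simp only [pr, Finset.mem_filter, Finset.mem_product, Finset.mem_range]
  exact ⟨⟨by omega, by omega⟩, h1, h2, h3⟩

lemma mem_spec {k : ℕ} (hk : k ≤ n+1) {p : ℕ × ℕ} (hp : p ∈ insert ((0:ℕ), n+1) (pr n k)) :
    p.1 ≤ k ∧ k ≤ p.2 ∧ p.1 < p.2 ∧ p.2 ≤ n+1 := by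
  rcases Finset.mem_insert.1 hp with h | h
  · rw [h]; exact ⟨Nat.zero_le _, by omega, by omega, le_refl _⟩
  · simp only [pr, Finset.mem_filter, Finset.mem_product, Finset.mem_range] at h
    exact ⟨h.2.1, h.2.2.1, h.2.2.2, by omega⟩

include hγ

lemma vv_nonneg (i j k : ℕ) : 0 ≤ vv γ i j k :=
  Real.rpow_nonneg (mul_nonneg (pow_nonneg (g_nonneg hγ i) _) (pow_nonneg (g_nonneg hγ j) _)) _

lemma vv_pow {i j : ℕ} (k : ℕ) (hij : i < j) :
    vv γ i j k ^ (j - i) = g γ i ^ (j - k) * g γ j ^ (k - i) :=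
  Real.rpow_inv_natCast_pow
    (mul_nonneg (pow_nonneg (g_nonneg hγ i) _) (pow_nonneg (g_nonneg hγ j) _)) (by omega)

lemma hat_nonneg (k : ℕ) : 0 ≤ hat γ k := by
  refine le_trans ?_ (Finset.le_sup' _ (Finset.mem_insert_self _ _))
  exact vv_nonneg hγ 0 (n+1) k

lemma le_hat {i j k : ℕ} (h1 : i ≤ k) (h2 : k ≤ j) (h3 : i < j) (h4 : j ≤ n+1) :
    vv γ i j k ≤ hat γ k :=
  Finset.le_sup' (f := fun p : ℕ × ℕ => vv γ p.1 p.2 k) (mem_pr h1 h2 h3 h4)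

lemma tp_pos {x : ℝ} (hx : 0 < x) (h0 : 0 < γ 0) : 0 < tp γ x := by
  have : γ 0 * x ^ ((0 : Fin (n+2)) : ℕ) ≤ tp γ x :=
    Finset.le_sup' (f := fun k : Fin (n+2) => γ k * x ^ (k : ℕ)) (Finset.mem_univ 0)
  simpa using lt_of_lt_of_le (by positivity) this

lemma g_mul_le_tp {x : ℝ} {q : ℕ} (hq : q ≤ n + 1) : g γ q * x ^ q ≤ tp γ x := by
  have h : q < n + 2 := by omega
  have : γ ⟨q, h⟩ * x ^ ((⟨q, h⟩ : Fin (n+2)) : ℕ) ≤ tp γ x :=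
    Finset.le_sup' (f := fun k : Fin (n+2) => γ k * x ^ (k : ℕ)) (Finset.mem_univ ⟨q, h⟩)
  simpa [g_eq q h] using this


lemma hat_mul_le_tp (h0 : 0 < γ 0) {x : ℝ} (hx : 0 < x) {k : ℕ} (hk : k ≤ n+1) :
    hat γ k * x ^ k ≤ tp γ x := by
  obtain ⟨p, hp, he⟩ := Finset.exists_mem_eq_sup'
    (⟨((0:ℕ), n+1), Finset.mem_insert_self _ _⟩ :
      (insert ((0:ℕ), n+1) (pr n k)).Nonempty) (fun p : ℕ × ℕ => vv γ p.1 p.2 k)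
  rw [show hat γ k = vv γ p.1 p.2 k from he]
  obtain ⟨h1, h2, h3, h4⟩ := mem_spec hk hp
  set i := p.1 with hi
  set j := p.2 with hj
  have hij : i ≤ j := h3.le
  have hm : j - i ≠ 0 := by omega
  refine le_of_pow_le' (mul_nonneg (vv_nonneg hγ i j k) (by positivity))
    (le_of_lt (tp_pos hγ hx h0)) hm ?_
  have ek : k * (j - i) = i * (j - k) + j * (k - i) := by
    zify [h1, h2, hij]; ring
  rw [mul_pow, vv_pow hγ k h3, ← pow_mul, ek, pow_add, pow_mul, pow_mul]
  calc g γ i ^ (j - k) * g γ j ^ (k - i) * ((x ^ i) ^ (j - k) * (x ^ j) ^ (k - i))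
      = (g γ i * x ^ i) ^ (j - k) * (g γ j * x ^ j) ^ (k - i) := by
        rw [mul_pow, mul_pow]; ring
    _ ≤ tp γ x ^ (j - k) * tp γ x ^ (k - i) := by
        apply mul_le_mul
        · exact pow_le_pow_left₀ (mul_nonneg (g_nonneg hγ i) (by positivity))
            (g_mul_le_tp hγ (by omega)) _
        · exact pow_le_pow_left₀ (mul_nonneg (g_nonneg hγ j) (by positivity))
            (g_mul_le_tp hγ h4) _
        · exact pow_nonneg (mul_nonneg (g_nonneg hγ j) (by positivity)) _
        · exact pow_nonneg (le_of_lt (tp_pos hγ hx h0)) _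
    _ = tp γ x ^ (j - i) := by rw [← pow_add]; congr 1; omega

lemma vv_kk {i j : ℕ} (hij : i < j) : vv γ i j i = g γ i := by
  refine pow_eq_imp (vv_nonneg hγ i j i) (g_nonneg hγ i) (m := j - i) (by omega) ?_
  rw [vv_pow hγ i hij, Nat.sub_self, pow_zero, mul_one]

lemma vv_jj {i j : ℕ} (hij : i < j) : vv γ i j j = g γ j := by
  refine pow_eq_imp (vv_nonneg hγ i j j) (g_nonneg hγ j) (m := j - i) (by omega) ?_
  rw [vv_pow hγ j hij, Nat.sub_self, pow_zero, one_mul]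

lemma g_le_hat {k : ℕ} (hk : k ≤ n + 1) : g γ k ≤ hat γ k := by
  rcases Nat.lt_or_ge k (n+1) with h | h
  · rw [← vv_kk hγ h]
    exact le_hat hγ le_rfl h.le h le_rfl
  · have hk' : k = n + 1 := by omega
    subst hk'
    rw [← vv_jj hγ (show 0 < n + 1 by omega)]
    exact le_hat hγ (by omega) le_rfl (by omega) le_rfl

lemma hat_top : hat γ (n+1) = g γ (n+1) := by
  refine le_antisymm (Finset.sup'_le _ _ fun p hp => ?_) (g_le_hat hγ le_rfl)
  obtain ⟨h1, h2, h3, h4⟩ := mem_spec le_rfl hp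
  have hp2 : p.2 = n + 1 := by omega
  have e : vv γ p.1 p.2 (n+1) = vv γ p.1 p.2 p.2 := by rw [hp2]
  rw [e, vv_jj hγ h3, hp2]

noncomputable def bt (γ : Fin (n + 2) → ℝ) : Fin (n+1) → ℝ :=
  fun j => (g γ j / g γ (n+1)) ^ ((((n+1) - (j:ℕ) : ℕ) : ℝ)⁻¹)

noncomputable def al (γ : Fin (n + 2) → ℝ) : ℝ :=
  Finset.univ.sup' Finset.univ_nonempty (bt γ)

lemma bt_nonneg (j : Fin (n+1)) : 0 ≤ bt γ j :=
  Real.rpow_nonneg (div_nonneg (g_nonneg hγ _) (g_nonneg hγ _)) _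

lemma bt_pow (j : Fin (n+1)) : bt γ j ^ ((n+1) - (j:ℕ)) = g γ j / g γ (n+1) :=
  Real.rpow_inv_natCast_pow (div_nonneg (g_nonneg hγ _) (g_nonneg hγ _)) (by omega)

omit hγ in
lemma g_top (hd : 0 < γ (Fin.last (n+1))) : 0 < g γ (n+1) := by
  rw [g_eq (n+1) (by omega)]; exact hd

omit hγ in
lemma g_zero (h0 : 0 < γ 0) : 0 < g γ 0 := by
  rw [g_eq 0 (by omega)]; exact h0

omit hγ in
lemma al_pos (h0 : 0 < γ 0) (hd : 0 < γ (Fin.last (n+1))) : 0 < al γ := by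
  have h1 : (0:ℝ) < bt γ 0 := by
    apply Real.rpow_pos_of_pos
    exact div_pos (by simpa using g_zero h0) (g_top hd)
  exact lt_of_lt_of_le h1 (Finset.le_sup' (f := bt γ) (Finset.mem_univ 0))

omit hγ in
lemma bt_le_al (j : Fin (n+1)) : bt γ j ≤ al γ :=
  Finset.le_sup' (f := bt γ) (Finset.mem_univ j)

lemma al_nonneg : 0 ≤ al γ := le_trans (bt_nonneg hγ 0) (bt_le_al 0)

/-- L6 : `g q ≤ g (n+1) * al ^ (n+1-q)` -/
lemma g_le_top_mul (hd : 0 < γ (Fin.last (n+1))) {q : ℕ} (hq : q ≤ n+1) :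
    g γ q ≤ g γ (n+1) * al γ ^ ((n+1) - q) := by
  rcases Nat.lt_or_ge q (n+1) with h | h
  · have hj : ((⟨q, by omega⟩ : Fin (n+1)) : ℕ) = q := rfl
    have h1 : bt γ ⟨q, by omega⟩ ≤ al γ := bt_le_al _
    have h2 : bt γ ⟨q, by omega⟩ ^ ((n+1) - q) ≤ al γ ^ ((n+1) - q) :=
      pow_le_pow_left₀ (bt_nonneg hγ _) h1 _
    rw [bt_pow hγ] at h2
    simp only [hj] at h2
    rw [div_le_iff₀ (g_top hd)] at h2
    linarith [h2]
  · have : q = n + 1 := by omega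
    subst this
    simp

/-- step0 : `g q ≤ al * vv q (n+1) (q+1)` -/
lemma step0 (hd : 0 < γ (Fin.last (n+1))) {q : ℕ} (hq : q ≤ n) :
    g γ q ≤ al γ * vv γ q (n+1) (q+1) := by
  have hal := al_nonneg hγ
  have hm : (n+1) - q ≠ 0 := by omega
  refine le_of_pow_le' (g_nonneg hγ q) (mul_nonneg hal (vv_nonneg hγ _ _ _)) hm ?_
  rw [mul_pow, vv_pow hγ (q+1) (by omega)]
  have e1 : (n+1) - (q+1) = n - q := by omega
  have e2 : (q+1) - q = 1 := by omega
  have e3 : (n+1) - q = (n - q) + 1 := by omega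
  rw [e1, e2, e3, pow_one, pow_succ]
  have h6 := g_le_top_mul hγ hd (le_trans hq (by omega) : q ≤ n+1)
  rw [e3] at h6
  calc g γ q ^ (n - q) * g γ q
      ≤ g γ q ^ (n - q) * (g γ (n+1) * al γ ^ ((n - q) + 1)) :=
        mul_le_mul_of_nonneg_left h6 (pow_nonneg (g_nonneg hγ q) _)
    _ = al γ ^ ((n - q) + 1) * (g γ q ^ (n - q) * g γ (n+1)) := by ring

/-- case A : if the chord from `i` to `j` has slope ≤ al, move right one step. -/
lemma caseA {i j k : ℕ} (hik : i ≤ k) (hkj : k + 1 ≤ j)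
    (hb : g γ i ≤ g γ j * al γ ^ (j - i)) (hal : 0 ≤ al γ) :
    vv γ i j k ≤ al γ * vv γ i j (k+1) := by
  have hij : i < j := by omega
  have hm : j - i ≠ 0 := by omega
  refine le_of_pow_le' (vv_nonneg hγ _ _ _) (mul_nonneg hal (vv_nonneg hγ _ _ _)) hm ?_
  rw [mul_pow, vv_pow hγ k hij, vv_pow hγ (k+1) hij]
  obtain ⟨P, hP⟩ : ∃ P, k = i + P := ⟨k - i, by omega⟩
  obtain ⟨Q, hQ⟩ : ∃ Q, j = k + 1 + Q := ⟨j - (k+1), by omega⟩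
  subst hP; subst hQ
  have e1 : i + P + 1 + Q - (i + P) = Q + 1 := by omega
  have e2 : i + P + 1 + Q - (i + P + 1) = Q := by omega
  have e3 : i + P - i = P := by omega
  have e4 : i + P + 1 - i = P + 1 := by omega
  have e5 : i + P + 1 + Q - i = P + 1 + Q := by omega
  rw [e1, e2, e3, e4, e5]
  rw [e5] at hb
  calc g γ i ^ (Q + 1) * g γ (i + P + 1 + Q) ^ P
      = g γ i * (g γ i ^ Q * g γ (i + P + 1 + Q) ^ P) := by ring
    _ ≤ (g γ (i + P + 1 + Q) * al γ ^ (P + 1 + Q)) * (g γ i ^ Q * g γ (i + P + 1 + Q) ^ P) := by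
        apply mul_le_mul_of_nonneg_right hb
        exact mul_nonneg (pow_nonneg (g_nonneg hγ _) _) (pow_nonneg (g_nonneg hγ _) _)
    _ = al γ ^ (P + 1 + Q) * (g γ i ^ Q * g γ (i + P + 1 + Q) ^ (P + 1)) := by ring

/-- case B : chord steeper than `al` lies below the chord to the top. -/
lemma caseB (hd : 0 < γ (Fin.last (n+1))) (h0 : 0 < γ 0) {i j k : ℕ}
    (hik : i ≤ k) (hkj : k ≤ j) (hij : i < j) (hjn : j ≤ n + 1)
    (hb : g γ j * al γ ^ (j - i) ≤ g γ i) :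
    vv γ i j k ≤ vv γ i (n+1) k := by
  have hal := al_pos h0 hd
  have hin : i < n + 1 := by omega
  have hM : (j - i) * ((n+1) - i) ≠ 0 := by
    simp only [Nat.mul_ne_zero_iff]; omega
  refine le_of_pow_le' (vv_nonneg hγ _ _ _) (vv_nonneg hγ _ _ _) hM ?_
  rw [pow_mul, vv_pow hγ k hij, mul_comm (j - i) ((n+1) - i), pow_mul, vv_pow hγ k hin]
  obtain ⟨P, hP⟩ : ∃ P, k = i + P := ⟨k - i, by omega⟩
  subst hP
  obtain ⟨Q, hQ⟩ : ∃ Q, j = i + P + Q := ⟨j - (i + P), by omega⟩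
  subst hQ
  have hbQ : g γ (i+P+Q) * al γ ^ (P+Q) ≤ g γ i := by
    rw [show i+P+Q-i = P+Q from by omega] at hb; exact hb
  have h6 : g γ (i+P+Q) ≤ g γ (n+1) * al γ ^ ((n+1) - (i+P+Q)) :=
    g_le_top_mul hγ hd (by omega)
  obtain ⟨R, hR⟩ : ∃ R, (n+1) - (i+P+Q) = R := ⟨_, rfl⟩
  rw [hR] at h6
  simp only [show i+P+Q-(i+P) = Q from by omega, show i+P-i = P from by omega,
    show n+1-i = P+Q+R from by omega, show n+1-(i+P) = Q+R from by omega,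
    show i+P+Q-i = P+Q from by omega]
  refine le_of_mul_le_mul_right ?_ (pow_pos hal ((P+Q)*(P*R)))
  have hA := g_nonneg hγ i
  have hB := g_nonneg hγ (i+P+Q)
  have hC := g_nonneg hγ (n+1)
  calc (g γ i ^ Q * g γ (i+P+Q) ^ P) ^ (P+Q+R) * al γ ^ ((P+Q)*(P*R))
      = g γ i ^ (Q*(P+Q+R)) * g γ (i+P+Q) ^ ((P+Q)*P) * (g γ (i+P+Q) * al γ ^ (P+Q)) ^ (P*R) := by
        ring
    _ ≤ g γ i ^ (Q*(P+Q+R)) * g γ (i+P+Q) ^ ((P+Q)*P) * g γ i ^ (P*R) := by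
        apply mul_le_mul_of_nonneg_left
        · exact pow_le_pow_left₀ (mul_nonneg hB (pow_nonneg hal.le _)) hbQ _
        · exact mul_nonneg (pow_nonneg hA _) (pow_nonneg hB _)
    _ ≤ g γ i ^ (Q*(P+Q+R)) * (g γ (n+1) * al γ ^ R) ^ ((P+Q)*P) * g γ i ^ (P*R) := by
        apply mul_le_mul_of_nonneg_right _ (pow_nonneg hA _)
        apply mul_le_mul_of_nonneg_left _ (pow_nonneg hA _)
        exact pow_le_pow_left₀ hB h6 _
    _ = (g γ i ^ (Q+R) * g γ (n+1) ^ P) ^ (P+Q) * al γ ^ ((P+Q)*(P*R)) := by ring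

lemma g_le_al_hat (hd : 0 < γ (Fin.last (n+1))) {k : ℕ} (hk : k ≤ n) :
    g γ k ≤ al γ * hat γ (k+1) :=
  (step0 hγ hd hk).trans (mul_le_mul_of_nonneg_left
    (le_hat hγ (by omega) (by omega) (by omega) le_rfl) (al_nonneg hγ))

/-- L4 : the key concavity step `hat k ≤ al * hat (k+1)`. -/
lemma hat_step (h0 : 0 < γ 0) (hd : 0 < γ (Fin.last (n+1))) {k : ℕ} (hk : k ≤ n) :
    hat γ k ≤ al γ * hat γ (k+1) := by
  apply Finset.sup'_le
  intro p hp
  obtain ⟨h1, h2, h3, h4⟩ := mem_spec (show k ≤ n+1 by omega) hp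
  rcases eq_or_lt_of_le h2 with hkj | hkj
  · -- k = p.2 : the value is g γ k
    have e : vv γ p.1 p.2 k = vv γ p.1 p.2 p.2 := by rw [hkj]
    rw [e, vv_jj hγ h3, ← hkj]
    exact g_le_al_hat hγ hd hk
  · rcases le_total (g γ p.1) (g γ p.2 * al γ ^ (p.2 - p.1)) with hA | hB
    · calc vv γ p.1 p.2 k ≤ al γ * vv γ p.1 p.2 (k+1) :=
            caseA hγ h1 hkj hA (al_nonneg hγ)
        _ ≤ al γ * hat γ (k+1) := mul_le_mul_of_nonneg_left
            (le_hat hγ (by omega) hkj h3 h4) (al_nonneg hγ)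
    · calc vv γ p.1 p.2 k ≤ vv γ p.1 (n+1) k :=
            caseB hγ hd h0 h1 h2 h3 h4 hB
        _ ≤ al γ * vv γ p.1 (n+1) (k+1) :=
            caseA hγ h1 (by omega) (by
              have := g_le_top_mul hγ hd (show p.1 ≤ n+1 by omega)
              exact this) (al_nonneg hγ)
        _ ≤ al γ * hat γ (k+1) := mul_le_mul_of_nonneg_left
            (le_hat hγ (by omega) (by omega) (by omega) le_rfl) (al_nonneg hγ)

lemma hat_chain (h0 : 0 < γ 0) (hd : 0 < γ (Fin.last (n+1))) (r : ℕ) (hr : r ≤ n+1) :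
    hat γ (n+1-r) ≤ g γ (n+1) * al γ ^ r := by
  induction r with
  | zero => simpa using (hat_top hγ).le
  | succ r ih =>
    have h1 : n+1-(r+1) ≤ n := by omega
    have e : n+1-(r+1)+1 = n+1-r := by omega
    calc hat γ (n+1-(r+1)) ≤ al γ * hat γ (n+1-(r+1)+1) := hat_step hγ h0 hd h1
      _ = al γ * hat γ (n+1-r) := by rw [e]
      _ ≤ al γ * (g γ (n+1) * al γ ^ r) :=
          mul_le_mul_of_nonneg_left (ih (by omega)) (al_nonneg hγ)
      _ = g γ (n+1) * al γ ^ (r+1) := by ring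

lemma hat_le_top_al (h0 : 0 < γ 0) (hd : 0 < γ (Fin.last (n+1))) {q : ℕ} (hq : q ≤ n+1) :
    hat γ q ≤ g γ (n+1) * al γ ^ ((n+1) - q) := by
  have := hat_chain hγ h0 hd ((n+1) - q) (by omega)
  rwa [show n+1-((n+1)-q) = q from by omega] at this

lemma hat_n (h0 : 0 < γ 0) (hd : 0 < γ (Fin.last (n+1))) :
    hat γ n = al γ * g γ (n+1) := by
  refine le_antisymm ?_ ?_
  · have := hat_le_top_al hγ h0 hd (show n ≤ n+1 by omega)
    rwa [show n+1-n = 1 from by omega, pow_one, mul_comm] at this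
  · obtain ⟨js, _, hjs⟩ := Finset.exists_mem_eq_sup'
      (Finset.univ_nonempty : (Finset.univ : Finset (Fin (n+1))).Nonempty) (bt γ)
    have hjn : (js : ℕ) ≤ n := by omega
    have heq : al γ * g γ (n+1) = vv γ js (n+1) n := by
      refine pow_eq_imp (mul_nonneg (al_nonneg hγ) (g_nonneg hγ _))
        (vv_nonneg hγ _ _ _) (m := (n+1) - (js:ℕ)) (by omega) ?_
      rw [mul_pow, vv_pow hγ n (by omega)]
      have : al γ ^ ((n+1) - (js:ℕ)) = g γ js / g γ (n+1) := by
        rw [show al γ = bt γ js from hjs]; exact bt_pow hγ js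
      rw [this, show (n+1) - (js:ℕ) = (n - (js:ℕ)) + 1 from by omega,
        show (n+1) - n = 1 from by omega, pow_one, pow_succ]
      field_simp [(g_top hd).ne']
    rw [heq]
    exact le_hat hγ hjn (by omega) (by omega) le_rfl

lemma vv_mul_pow {i j k : ℕ} (h1 : i ≤ k) (h2 : k ≤ j) (h3 : i < j) (x : ℝ) :
    (vv γ i j k * x ^ k) ^ (j - i) = (g γ i * x ^ i) ^ (j - k) * (g γ j * x ^ j) ^ (k - i) := by
  have hij : i ≤ j := h3.le
  rw [mul_pow, vv_pow hγ k h3, ← pow_mul,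
    show k*(j-i) = i*(j-k)+j*(k-i) from by zify [h1, h2, hij]; ring,
    pow_add, pow_mul, pow_mul, mul_pow, mul_pow]
  ring

end MTAux

open MTAux in
theorem maxtimes_aux : ∀ (d : ℕ) (γ : Fin (d + 1) → ℝ), (∀ k, 0 ≤ γ k) → 0 < γ 0 →
    0 < γ (Fin.last d) →
    ∃ α : Fin d → ℝ, Monotone α ∧ (∀ k, 0 < α k) ∧
      (∀ B : ℝ, 0 ≤ B → (∀ j : Fin (d+1), γ j ≤ γ (Fin.last d) * B ^ (d - (j:ℕ))) →
        ∀ k, α k ≤ B) ∧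
      (∀ k : Fin d, ∃ k₁ k₂ : Fin (d + 1), k₁ ≠ k₂ ∧
        γ k₁ * α k ^ (k₁ : ℕ) =
          (Finset.univ.sup' Finset.univ_nonempty fun j : Fin (d + 1) => γ j * α k ^ (j : ℕ)) ∧
        γ k₂ * α k ^ (k₂ : ℕ) =
          (Finset.univ.sup' Finset.univ_nonempty fun j : Fin (d + 1) => γ j * α k ^ (j : ℕ))) ∧
      ∀ x : ℝ, 0 < x →
        (Finset.univ.sup' Finset.univ_nonempty fun k : Fin (d + 1) => γ k * x ^ (k : ℕ)) =
          γ (Fin.last d) * ∏ k : Fin d, max x (α k) := by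
  intro d
  induction d with
  | zero =>
    intro γ hγ h0 hd
    refine ⟨Fin.elim0, fun i => i.elim0, fun k => k.elim0, fun B _ _ k => k.elim0,
      fun k => k.elim0, fun x hx => ?_⟩
    refine le_antisymm (Finset.sup'_le _ _ fun b _ => ?_) ?_
    · have hb : b = 0 := Fin.ext (by omega)
      subst hb
      simp [Fin.last]
    · have := Finset.le_sup' (f := fun k : Fin (0+1) => γ k * x ^ (k:ℕ)) (Finset.mem_univ 0)
      simpa [Fin.last] using this
  | succ n ih =>
    intro γ hγ h0 hd
    have hgt : 0 < g γ (n+1) := g_top hd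
    have hgte : g γ (n+1) = γ (Fin.last (n+1)) := by
      rw [g_eq (n+1) (by omega)]
      exact congrArg γ (Fin.ext rfl)
    have halpos : 0 < al γ := al_pos h0 hd
    have halnn : 0 ≤ al γ := halpos.le
    set A := al γ with hAdef
    set γ' : Fin (n + 1) → ℝ := fun k => hat γ (k : ℕ) / A with hγ'def
    have hγ'nn : ∀ k, 0 ≤ γ' k := fun k => div_nonneg (hat_nonneg hγ _) halnn
    have hγ'0 : 0 < γ' 0 := by
      apply div_pos _ halpos
      have h1 : (0:ℝ) < g γ 0 := g_zero h0
      have h2 : g γ ((0 : Fin (n+1)) : ℕ) ≤ hat γ ((0 : Fin (n+1)) : ℕ) :=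
        g_le_hat hγ (by omega)
      simp only [Fin.val_zero] at h2 ⊢
      linarith
    have hγ'last : γ' (Fin.last n) = γ (Fin.last (n + 1)) := by
      simp only [hγ'def, Fin.val_last]
      rw [hat_n hγ h0 hd, hAdef, mul_div_cancel_left₀ _ halpos.ne', hgte]
    obtain ⟨α', hmono', hpos', hB', hroots', hfact'⟩ :=
      ih γ' hγ'nn hγ'0 (by rw [hγ'last]; exact hd)
    have hhat_le : ∀ q : ℕ, q ≤ n+1 → hat γ q ≤ g γ (n+1) * A ^ (n + 1 - q) :=
      fun q hq => hat_le_top_al hγ h0 hd hq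
    have hγ'le : ∀ (j : Fin (n+1)) (B : ℝ), 0 ≤ B → A ≤ B →
        γ' j ≤ γ' (Fin.last n) * B ^ (n - (j:ℕ)) := by
      intro j B hB0 hAB
      rw [hγ'last, ← hgte]
      simp only [hγ'def]
      rw [div_le_iff₀ halpos]
      calc hat γ (j:ℕ) ≤ g γ (n+1) * A ^ (n+1-(j:ℕ)) := hhat_le _ (by omega)
        _ = (g γ (n+1) * A ^ (n-(j:ℕ))) * A := by
            rw [show (n+1-(j:ℕ)) = (n-(j:ℕ))+1 from by omega, pow_succ]; ring
        _ ≤ (g γ (n+1) * B ^ (n-(j:ℕ))) * A := by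
            apply mul_le_mul_of_nonneg_right _ halnn
            exact mul_le_mul_of_nonneg_left (pow_le_pow_left₀ halnn hAB _) hgt.le
    have hα'A : ∀ m, α' m ≤ A := by
      apply hB' A halnn
      intro j
      exact hγ'le j A halnn le_rfl
    -- the factorization bridge
    have hbridge : ∀ x : ℝ, 0 < x → tp γ x = max x A *
        Finset.univ.sup' Finset.univ_nonempty (fun k : Fin (n+1) => γ' k * x ^ (k:ℕ)) := by
      intro x hx
      refine le_antisymm (Finset.sup'_le _ _ fun q _ => ?_) ?_
      · by_cases hq : (q:ℕ) ≤ n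
        · have e1 : γ q = g γ (q:ℕ) := (g_eq _ q.isLt).symm
          have e2 : A * γ' ⟨(q:ℕ), by omega⟩ = hat γ (q:ℕ) := by
            simp only [hγ'def]
            field_simp
          calc γ q * x ^ (q:ℕ) ≤ hat γ (q:ℕ) * x ^ (q:ℕ) := by
                rw [e1]
                exact mul_le_mul_of_nonneg_right (g_le_hat hγ (by omega)) (by positivity)
            _ = A * (γ' ⟨(q:ℕ), by omega⟩ * x ^ (q:ℕ)) := by rw [← mul_assoc, e2]
            _ ≤ max x A * Finset.univ.sup' Finset.univ_nonempty
                  (fun k : Fin (n+1) => γ' k * x ^ (k:ℕ)) := by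
                apply mul_le_mul (le_max_right x A) _
                  (mul_nonneg (hγ'nn _) (by positivity))
                  (le_trans halnn (le_max_right x A))
                exact Finset.le_sup' (f := fun k : Fin (n+1) => γ' k * x ^ (k:ℕ))
                  (Finset.mem_univ _)
        · have hq1 : q = Fin.last (n+1) := Fin.ext (by
            have := q.isLt
            simp only [Fin.val_last]
            omega)
          rw [hq1]
          calc γ (Fin.last (n+1)) * x ^ ((Fin.last (n+1) : Fin (n+2)):ℕ)
              = x * (γ' (Fin.last n) * x ^ ((Fin.last n : Fin (n+1)):ℕ)) := by
                rw [hγ'last]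
                simp only [Fin.val_last]
                rw [pow_succ]; ring
            _ ≤ max x A * Finset.univ.sup' Finset.univ_nonempty
                  (fun k : Fin (n+1) => γ' k * x ^ (k:ℕ)) := by
                apply mul_le_mul (le_max_left x A) _
                  (mul_nonneg (hγ'nn _) (by positivity))
                  (le_trans hx.le (le_max_left x A))
                exact Finset.le_sup' (f := fun k : Fin (n+1) => γ' k * x ^ (k:ℕ))
                  (Finset.mem_univ _)
      · obtain ⟨kk, _, hkk⟩ := Finset.exists_mem_eq_sup' Finset.univ_nonempty
          (fun k : Fin (n+1) => γ' k * x ^ (k:ℕ))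
        have hkn : (kk:ℕ) ≤ n := by omega
        have hb1 : A * (γ' kk * x ^ (kk:ℕ)) ≤ tp γ x := by
          have e : A * γ' kk = hat γ (kk:ℕ) := by simp only [hγ'def]; field_simp
          rw [← mul_assoc, e]
          exact hat_mul_le_tp hγ h0 hx (by omega)
        have hb2 : x * (γ' kk * x ^ (kk:ℕ)) ≤ tp γ x := by
          have e : γ' kk ≤ hat γ ((kk:ℕ)+1) := by
            simp only [hγ'def]
            rw [div_le_iff₀ halpos, mul_comm]
            exact hat_step hγ h0 hd hkn
          calc x * (γ' kk * x ^ (kk:ℕ)) = γ' kk * x ^ ((kk:ℕ)+1) := by rw [pow_succ]; ring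
            _ ≤ hat γ ((kk:ℕ)+1) * x ^ ((kk:ℕ)+1) :=
                mul_le_mul_of_nonneg_right e (by positivity)
            _ ≤ tp γ x := hat_mul_le_tp hγ h0 hx (by omega)
        rw [hkk]
        rcases max_choice x A with hmax | hmax <;> rw [hmax]
        · exact hb2
        · exact hb1
    refine ⟨Fin.snoc α' A, monotone_snoc α' A hmono' hα'A, ?_, ?_, ?_, ?_⟩
    · -- positivity
      intro k
      refine Fin.lastCases ?_ (fun m => ?_) k
      · rw [Fin.snoc_last]; exact halpos
      · rw [Fin.snoc_castSucc]; exact hpos' m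
    · -- B bound
      intro B hB0 hBp
      have hAB : A ≤ B := by
        apply Finset.sup'_le
        intro j _
        refine le_of_pow_le' (bt_nonneg hγ j) hB0 (m := n+1-(j:ℕ)) (by omega) ?_
        rw [bt_pow hγ j, div_le_iff₀ hgt]
        have hprem := hBp j.castSucc
        simp only [Fin.coe_castSucc] at hprem
        calc g γ (j:ℕ) = γ j.castSucc := by
              rw [g_eq (j:ℕ) (by omega)]
              congr 1
          _ ≤ γ (Fin.last (n+1)) * B ^ ((n+1)-(j:ℕ)) := hprem
          _ = B ^ ((n+1)-(j:ℕ)) * g γ (n+1) := by rw [hgte]; ring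
      intro k
      refine Fin.lastCases ?_ (fun m => ?_) k
      · rw [Fin.snoc_last]; exact hAB
      · rw [Fin.snoc_castSucc]
        exact hB' B hB0 (fun j => hγ'le j B hB0 hAB) m
    · -- roots
      intro k
      refine Fin.lastCases ?_ (fun m => ?_) k
      · simp only [Fin.snoc_last]
        obtain ⟨js, _, hjs⟩ := Finset.exists_mem_eq_sup'
          (Finset.univ_nonempty : (Finset.univ : Finset (Fin (n+1))).Nonempty) (bt γ)
        have hjsn : (js:ℕ) ≤ n := by omega
        have hsupA : (Finset.univ.sup' Finset.univ_nonempty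
            fun j : Fin (n+2) => γ j * A ^ (j:ℕ)) = γ (Fin.last (n+1)) * A ^ (n+1) := by
          refine le_antisymm (Finset.sup'_le _ _ fun q _ => ?_) ?_
          · calc γ q * A ^ (q:ℕ) = g γ (q:ℕ) * A ^ (q:ℕ) := by rw [g_eq _ q.isLt]
              _ ≤ (g γ (n+1) * A ^ ((n+1)-(q:ℕ))) * A ^ (q:ℕ) :=
                  mul_le_mul_of_nonneg_right (g_le_top_mul hγ hd (by omega)) (by positivity)
              _ = γ (Fin.last (n+1)) * A ^ (n+1) := by
                  rw [hgte, mul_assoc, ← pow_add,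
                    show (n+1)-(q:ℕ)+(q:ℕ) = n+1 from by omega]
          · have := Finset.le_sup' (f := fun j : Fin (n+2) => γ j * A ^ (j:ℕ))
              (Finset.mem_univ (Fin.last (n+1)))
            simpa only [Fin.val_last] using this
        have hjs' : al γ = bt γ js := hjs
        have hpowA : A ^ ((n+1) - (js:ℕ)) * g γ (n+1) = g γ (js:ℕ) := by
          rw [hAdef, hjs', bt_pow hγ js, div_mul_cancel₀ _ hgt.ne']
        refine ⟨js.castSucc, Fin.last (n+1), (Fin.castSucc_lt_last js).ne, ?_, ?_⟩
        · rw [hsupA]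
          calc γ js.castSucc * A ^ ((js.castSucc : Fin (n+2)):ℕ)
              = g γ (js:ℕ) * A ^ (js:ℕ) := by
                simp only [Fin.coe_castSucc]
                rw [g_eq (js:ℕ) (by omega)]
                congr 2
            _ = (A ^ ((n+1) - (js:ℕ)) * g γ (n+1)) * A ^ (js:ℕ) := by rw [hpowA]
            _ = γ (Fin.last (n+1)) * A ^ (n+1) := by
                rw [hgte, mul_comm (A ^ ((n+1)-(js:ℕ))), mul_assoc, ← pow_add,
                  show (n+1)-(js:ℕ)+(js:ℕ) = n+1 from by omega]
        · rw [hsupA]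
          simp only [Fin.val_last]
      · -- interior roots
        simp only [Fin.snoc_castSucc]
        have hx : 0 < α' m := hpos' m
        have hxA : α' m ≤ A := hα'A m
        obtain ⟨k₁, k₂, hne, e₁, e₂⟩ := hroots' m
        have hTpos : 0 < tp γ (α' m) := tp_pos hγ hx h0
        have htpx : tp γ (α' m) = A * (Finset.univ.sup' Finset.univ_nonempty
            fun j : Fin (n+1) => γ' j * α' m ^ (j:ℕ)) := by
          rw [hbridge _ hx, max_eq_right hxA]
        have key : ∀ w : Fin (n+1), γ' w * α' m ^ (w:ℕ) = (Finset.univ.sup' Finset.univ_nonempty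
              fun j : Fin (n+1) => γ' j * α' m ^ (j:ℕ)) →
            (∃ a b : Fin (n+2), a ≠ b ∧ γ a * α' m ^ (a:ℕ) = tp γ (α' m) ∧
              γ b * α' m ^ (b:ℕ) = tp γ (α' m)) ∨
            (γ w.castSucc * α' m ^ (w:ℕ) = tp γ (α' m)) := by
          intro w hw
          have hhatw : hat γ (w:ℕ) * α' m ^ (w:ℕ) = tp γ (α' m) := by
            have e : A * γ' w = hat γ (w:ℕ) := by simp only [hγ'def]; field_simp
            rw [htpx, ← hw, ← mul_assoc, e]
          obtain ⟨p, hp, he⟩ := Finset.exists_mem_eq_sup'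
            (⟨((0:ℕ), n+1), Finset.mem_insert_self _ _⟩ :
              (insert ((0:ℕ), n+1) (pr n (w:ℕ))).Nonempty)
            (fun p : ℕ × ℕ => vv γ p.1 p.2 (w:ℕ))
          obtain ⟨i, j⟩ := p
          have he' : hat γ (w:ℕ) = vv γ i j (w:ℕ) := he
          obtain ⟨h1, h2, h3, h4⟩ := mem_spec (show (w:ℕ) ≤ n+1 by omega) hp
          simp only at h1 h2 h3 h4
          have hpq : (g γ i * α' m ^ i) ^ (j - (w:ℕ)) * (g γ j * α' m ^ j) ^ ((w:ℕ) - i)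
              = tp γ (α' m) ^ (j - i) := by
            calc (g γ i * α' m ^ i) ^ (j - (w:ℕ)) * (g γ j * α' m ^ j) ^ ((w:ℕ) - i)
                = (vv γ i j (w:ℕ) * α' m ^ (w:ℕ)) ^ (j - i) :=
                  (vv_mul_pow hγ h1 h2 h3 (α' m)).symm
              _ = tp γ (α' m) ^ (j - i) := by rw [← he', hhatw]
          rcases eq_or_lt_of_le h1 with hiw | hiw
          · right
            subst hiw
            rw [Nat.sub_self, pow_zero, mul_one] at hpq
            have hgi : g γ (w:ℕ) * α' m ^ (w:ℕ) = tp γ (α' m) :=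
              pow_eq_imp (mul_nonneg (g_nonneg hγ _) (by positivity)) hTpos.le
                (by omega) hpq
            rw [g_eq (w:ℕ) (by omega)] at hgi
            have hwc : (⟨(w:ℕ), by omega⟩ : Fin (n+2)) = w.castSucc := Fin.ext (by simp)
            rw [hwc] at hgi
            exact hgi
          · rcases eq_or_lt_of_le h2 with hwj | hwj
            · right
              subst hwj
              rw [Nat.sub_self, pow_zero, one_mul] at hpq
              have hgj : g γ (w:ℕ) * α' m ^ (w:ℕ) = tp γ (α' m) :=
                pow_eq_imp (mul_nonneg (g_nonneg hγ _) (by positivity)) hTpos.le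
                  (by omega) hpq
              rw [g_eq (w:ℕ) (by omega)] at hgj
              have hwc : (⟨(w:ℕ), by omega⟩ : Fin (n+2)) = w.castSucc := Fin.ext (by simp)
              rw [hwc] at hgj
              exact hgj
            · left
              rw [show j - i = (j - (w:ℕ)) + ((w:ℕ) - i) from by omega] at hpq
              obtain ⟨hga, hgb⟩ := gm_eq_max
                (mul_nonneg (g_nonneg hγ i) (by positivity))
                (mul_nonneg (g_nonneg hγ j) (by positivity)) hTpos
                (g_mul_le_tp hγ (by omega)) (g_mul_le_tp hγ h4)
                (by omega) (by omega) hpq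
              refine ⟨⟨i, by omega⟩, ⟨j, by omega⟩, by simp [Fin.ext_iff]; omega, ?_, ?_⟩
              · have := hga
                rw [g_eq i (by omega)] at this
                simpa using this
              · have := hgb
                rw [g_eq j (by omega)] at this
                simpa using this
        rcases key k₁ e₁ with ⟨a, b, hab, ha, hb⟩ | hW1
        · exact ⟨a, b, hab, ha, hb⟩
        · rcases key k₂ e₂ with ⟨a, b, hab, ha, hb⟩ | hW2
          · exact ⟨a, b, hab, ha, hb⟩
          · refine ⟨k₁.castSucc, k₂.castSucc, ?_, ?_, ?_⟩
            · simpa [Fin.castSucc_inj] using hne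
            · simpa [tp] using hW1
            · simpa [tp] using hW2
    · -- factorization
      intro x hx
      have hP : ∏ k : Fin (n+1), max x ((Fin.snoc α' A : Fin (n+1) → ℝ) k) =
          (∏ k : Fin n, max x (α' k)) * max x A := by
        rw [Fin.prod_univ_castSucc]
        simp [Fin.snoc_castSucc, Fin.snoc_last]
      calc (Finset.univ.sup' Finset.univ_nonempty
            fun k : Fin (n+2) => γ k * x ^ (k:ℕ))
          = max x A * (Finset.univ.sup' Finset.univ_nonempty
            (fun k : Fin (n+1) => γ' k * x ^ (k:ℕ))) := hbridge x hx
        _ = max x A * (γ' (Fin.last n) * ∏ k : Fin n, max x (α' k)) := by rw [hfact' x hx]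
        _ = γ (Fin.last (n+1)) * ∏ k : Fin (n+1), max x ((Fin.snoc α' A : Fin (n+1) → ℝ) k) := by
            rw [hγ'last, hP]; ring

/-- max-times fundamental theorem of algebra: let
`tp(x) = max_{0≤k≤d}(γ_k x^k)` with `γ_k ≥ 0` and `γ₀, γ_d > 0`.  Then there are
tropical roots `α₁ ≤ … ≤ α_d ≥ 0` (counted with multiplicity, each a point where the
maximum defining `tp` is attained at least twice) such that for every `x > 0`,
`tp(x) = γ_d · Π_{k=1}^d max(x, α_k)`. -/
theorem maxtimes_factorization (d : ℕ) (γ : Fin (d + 1) → ℝ)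
    (hγ : ∀ k, 0 ≤ γ k) (h0 : 0 < γ 0) (hd : 0 < γ (Fin.last d)) :
    ∃ α : Fin d → ℝ, Monotone α ∧ (∀ k, 0 ≤ α k) ∧
      (∀ k : Fin d, ∃ k₁ k₂ : Fin (d + 1), k₁ ≠ k₂ ∧
        γ k₁ * α k ^ (k₁ : ℕ) =
          (Finset.univ.sup' Finset.univ_nonempty fun j : Fin (d + 1) => γ j * α k ^ (j : ℕ)) ∧
        γ k₂ * α k ^ (k₂ : ℕ) =
          (Finset.univ.sup' Finset.univ_nonempty fun j : Fin (d + 1) => γ j * α k ^ (j : ℕ))) ∧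
      ∀ x : ℝ, 0 < x →
        (Finset.univ.sup' Finset.univ_nonempty fun k : Fin (d + 1) => γ k * x ^ (k : ℕ)) =
          γ (Fin.last d) * ∏ k : Fin d, max x (α k) := by
  obtain ⟨α, h1, h2, _, h4, h5⟩ := maxtimes_aux d γ hγ h0 hd
  exact ⟨α, h1, fun k => (h2 k).le, h4, h5⟩
end
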